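/- Let k be an algebraically closed field of characteristic 2, and let U_1,...,U_n, V_1,...,V_n ∈ k[X] and α, β ∈ k(X) satisfy: (i) U_i = α V_i + β V_i^2 for all i, and (ii) β^{2^{n-1}-1} · Δ_n(V_1,...,V_n) = 1. Then det(U, V, U^2, U^4, ..., U^{2^{n-2}}) = 1, where U = (U_1,...,U_n), V = (V_1,...,V_n) and powers are componentwise. -/

import Mathlib

open Polynomial

/-- The Moore matrix of an `n`-tuple `a` in a ring of characteristic `p`:
its `(i,j)` entry is `a j ^ p ^ i`. -/
def mooreMatrix {k : Type*} [CommRing k] (p : ℕ) {n : ℕ} (a : Fin n → k) :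
    Matrix (Fin n) (Fin n) k :=
  Matrix.of fun i j => a j ^ p ^ (i : ℕ)

lemma two_term_sum {K : Type*} [CommRing K] {n : ℕ} (f g : Fin n → K) (a b : Fin n)
    (hab : a ≠ b) (hg : ∀ i, i ≠ a → i ≠ b → g i = 0) :
    ∑ i, f i * g i = f a * g a + f b * g b := by
  classical
  have h : ∑ i, f i * g i = ∑ i ∈ ({a, b} : Finset (Fin n)), f i * g i := by
    refine (Finset.sum_subset (Finset.subset_univ _) fun i _ hi => ?_).symm
    simp only [Finset.mem_insert, Finset.mem_singleton, not_or] at hi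
    rw [hg i hi.1 hi.2, mul_zero]
  rw [h, Finset.sum_pair hab]

lemma exp_sum (n : ℕ) :
    (∑ i ∈ Finset.range n, if i = 0 then 0 else 2 ^ (i - 1)) = 2 ^ (n - 1) - 1 := by
  induction n with
  | zero => simp
  | succ m ih =>
    rw [Finset.sum_range_succ, ih]
    rcases Nat.eq_zero_or_pos m with h | h
    · subst h; simp
    · have hm : m ≠ 0 := h.ne'
      rw [if_neg hm]
      have h2 : (1:ℕ) ≤ 2 ^ (m-1) := Nat.one_le_two_pow
      have e1 : 2 ^ (m + 1 - 1) = 2 * 2 ^ (m - 1) := by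
        rw [Nat.add_sub_cancel, ← pow_succ']
        congr 1
        omega
      omega

/-- In characteristic 2: if `Uᵢ = αVᵢ + βVᵢ²` for all `i` and
`β^{2^{n-1}-1}·Δ_n(V) = 1`, then `det(U, V, U², U⁴, …, U^{2^{n-2}}) = 1`. -/
theorem char_two_det_condition
    {k : Type*} [Field k] [IsAlgClosed k] [CharP k 2] (n : ℕ) (hn : 3 ≤ n)
    (U V : Fin n → Polynomial k) (α β : RatFunc k)
    (h1 : ∀ i, algebraMap (Polynomial k) (RatFunc k) (U i)
        = α * algebraMap (Polynomial k) (RatFunc k) (V i)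
          + β * algebraMap (Polynomial k) (RatFunc k) (V i) ^ 2)
    (h2 : β ^ (2 ^ (n - 1) - 1)
        * algebraMap (Polynomial k) (RatFunc k) (mooreMatrix 2 V).det = 1) :
    (Matrix.of fun i j : Fin n =>
        if (j : ℕ) = 0 then U i
        else if (j : ℕ) = 1 then V i
        else U i ^ 2 ^ ((j : ℕ) - 1)).det = 1 := by
  classical
  set φ := algebraMap (Polynomial k) (RatFunc k) with hφ
  haveI : CharP (RatFunc k) 2 :=
    charP_of_injective_algebraMap (RatFunc.algebraMap_injective k) 2
  set W : Fin n → RatFunc k := fun i => φ (V i) with hW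
  have h0 : (0:ℕ) < n := by omega
  have h1n : (1:ℕ) < n := by omega
  set z : Fin n := ⟨0, h0⟩ with hz
  set o : Fin n := ⟨1, h1n⟩ with ho
  have hzo : z ≠ o := by simp [hz, ho, Fin.ext_iff]
  set σ : Equiv.Perm (Fin n) := Equiv.swap z o with hσ
  set D : Matrix (Fin n) (Fin n) (RatFunc k) := Matrix.of fun i j =>
    if (j:ℕ) = 0 then (if (i:ℕ) = 0 then 1 else 0)
    else if (j:ℕ) = 1 then (if (i:ℕ) = 0 then α else if (i:ℕ) = 1 then β else 0)
    else if (i:ℕ) = (j:ℕ) - 1 then α ^ 2 ^ ((j:ℕ) - 1)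
    else if (i:ℕ) = (j:ℕ) then β ^ 2 ^ ((j:ℕ) - 1) else 0 with hD
  have hDtri : D.BlockTriangular id := by
    intro i j hij
    have hji : (j:ℕ) < (i:ℕ) := hij
    simp only [hD, Matrix.of_apply]
    split_ifs <;> first | rfl | omega
  have hDdiag : ∀ i : Fin n, D i i = β ^ (if (i:ℕ) = 0 then 0 else 2 ^ ((i:ℕ) - 1)) := by
    intro i
    simp only [hD, Matrix.of_apply]
    by_cases hi0 : (i:ℕ) = 0
    · simp [hi0]
    · by_cases hi1 : (i:ℕ) = 1
      · simp [hi0, hi1]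
      · have h1' : ¬ ((i:ℕ) = (i:ℕ) - 1) := by omega
        simp [hi0, hi1, h1']
  have hDdet : D.det = β ^ (2 ^ (n-1) - 1) := by
    rw [Matrix.det_of_upperTriangular hDtri]
    calc (∏ i : Fin n, D i i)
        = ∏ i : Fin n, β ^ (if (i:ℕ) = 0 then 0 else 2 ^ ((i:ℕ) - 1)) :=
          Finset.prod_congr rfl fun i _ => hDdiag i
      _ = β ^ ∑ i : Fin n, (if (i:ℕ) = 0 then 0 else 2 ^ ((i:ℕ) - 1)) :=
          Finset.prod_pow_eq_pow_sum _ _ _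
      _ = β ^ (2 ^ (n-1) - 1) := by
          rw [Fin.sum_univ_eq_sum_range (fun i => if i = 0 then 0 else 2 ^ (i - 1)) n,
            exp_sum]
  have hfact : ((Matrix.of fun i j : Fin n =>
        if (j : ℕ) = 0 then U i
        else if (j : ℕ) = 1 then V i
        else U i ^ 2 ^ ((j : ℕ) - 1)).map φ) = (mooreMatrix 2 W).transpose * (D.submatrix id σ) := by
    ext r j
    rw [Matrix.mul_apply]
    simp only [Matrix.map_apply, Matrix.of_apply, Matrix.transpose_apply,
      Matrix.submatrix_apply, mooreMatrix, id_eq]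
    by_cases hj0 : (j:ℕ) = 0
    · have hjz : j = z := Fin.ext hj0
      subst hjz
      have hσz : σ z = o := Equiv.swap_apply_left z o
      rw [hσz]
      have hsum := two_term_sum (fun i : Fin n => W r ^ 2 ^ (i:ℕ)) (fun i => D i o) z o hzo
        (by
          intro i hiz hio
          have hi0 : (i:ℕ) ≠ 0 := fun h => hiz (Fin.ext h)
          have hi1 : (i:ℕ) ≠ 1 := fun h => hio (Fin.ext h)
          simp [hD, ho, hi0, hi1])
      rw [hsum]
      have hDzo : D z o = α := by simp [hD, hz, ho]
      have hDoo : D o o = β := by simp [hD, ho]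
      simp only [hDzo, hDoo, show ((z:ℕ)) = 0 from rfl, show ((o:ℕ)) = 1 from rfl,
        if_pos rfl, if_true, eq_self_iff_true, pow_zero, pow_one]
      rw [h1 r]
      ring
    · by_cases hj1 : (j:ℕ) = 1
      · have hjo : j = o := Fin.ext hj1
        subst hjo
        have hσo : σ o = z := Equiv.swap_apply_right z o
        rw [hσo]
        have hsum : (∑ i : Fin n, W r ^ 2 ^ (i:ℕ) * D i z) = W r ^ 2 ^ (0:ℕ) * D z z := by
          refine Finset.sum_eq_single_of_mem z (Finset.mem_univ _) fun i _ hiz => ?_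
          have hi0 : (i:ℕ) ≠ 0 := fun h => hiz (Fin.ext h)
          simp [hD, hz, hi0]
        have hDzz : D z z = 1 := by simp [hD, hz]
        rw [hsum]
        simp only [hDzz, show ((z:ℕ)) = 0 from rfl, show ((o:ℕ)) = 1 from rfl, pow_zero,
          pow_one, mul_one, if_pos rfl, if_true, eq_self_iff_true]
        rw [if_neg (by omega : ¬ (1:ℕ) = 0)]
      · have hjz : j ≠ z := fun h => hj0 (by rw [h])
        have hjo : j ≠ o := fun h => hj1 (by rw [h])
        have hσj : σ j = j := Equiv.swap_apply_of_ne_of_ne hjz hjo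
        rw [hσj]
        simp only [if_neg hj0, if_neg hj1]
        have hjlt : ((j:ℕ) - 1) < n := by omega
        set a : Fin n := ⟨(j:ℕ) - 1, hjlt⟩ with ha
        have haj : a ≠ j := by
          intro h
          have h' := congrArg Fin.val h
          simp only [ha] at h'
          omega
        have hsum := two_term_sum (fun i : Fin n => W r ^ 2 ^ (i:ℕ)) (fun i => D i j) a j haj
          (by
            intro i hia hij
            have hi1 : (i:ℕ) ≠ (j:ℕ) - 1 := fun h => hia (Fin.ext h)
            have hi2 : (i:ℕ) ≠ (j:ℕ) := fun h => hij (Fin.ext h)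
            simp [hD, hj0, hj1, hi1, hi2])
        have hDaj : D a j = α ^ 2 ^ ((j:ℕ) - 1) := by
          simp [hD, ha, hj0, hj1]
        have hDjj : D j j = β ^ 2 ^ ((j:ℕ) - 1) := by
          have hne : ¬ ((j:ℕ) = (j:ℕ) - 1) := by omega
          simp [hD, hj0, hj1, hne]
        rw [hsum]
        simp only [hDaj, hDjj, show ((a:ℕ)) = (j:ℕ) - 1 from rfl]
        rw [map_pow, h1 r, add_pow_char_pow, mul_pow, mul_pow, ← pow_mul]
        have h2m : 2 * 2 ^ ((j:ℕ) - 1) = 2 ^ (j:ℕ) := by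
          rw [← pow_succ']
          congr 1
          omega
        rw [h2m]
        ring
  have hmoore : (mooreMatrix 2 V).map φ = mooreMatrix 2 W := by
    ext i j
    simp [mooreMatrix, map_pow, hW]
  have key : φ ((Matrix.of fun i j : Fin n =>
        if (j : ℕ) = 0 then U i
        else if (j : ℕ) = 1 then V i
        else U i ^ 2 ^ ((j : ℕ) - 1)).det) = 1 := by
    rw [RingHom.map_det, RingHom.mapMatrix_apply, hfact, Matrix.det_mul, Matrix.det_transpose, Matrix.det_permute',
      hDdet]
    have hsign : Equiv.Perm.sign σ = -1 := Equiv.Perm.sign_swap hzo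
    rw [hsign]
    have hmd : (mooreMatrix 2 W).det = φ ((mooreMatrix 2 V).det) := by
      rw [RingHom.map_det, RingHom.mapMatrix_apply, hmoore]
    rw [hmd]
    simp only [Units.val_neg, Units.val_one, Int.cast_neg, Int.cast_one, neg_one_mul,
      mul_neg]
    rw [CharTwo.neg_eq]
    rw [mul_comm]
    exact h2
  have := RatFunc.algebraMap_injective k (key.trans (map_one φ).symm)
  exact this
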